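/- For every real number z, erf(z)² ≤ 1 − exp(−(4/π) z²). -/

import Mathlib

open Real MeasureTheory Set

noncomputable section

namespace ErfSq

/-- Open quarter disk of radius `R` in the open first quadrant. -/
def qd (R : ℝ) : Set (ℝ × ℝ) := {p | 0 < p.1 ∧ 0 < p.2 ∧ p.1 ^ 2 + p.2 ^ 2 < R ^ 2}

lemma measurableSet_qd (R : ℝ) : MeasurableSet (qd R) := by
  have : qd R = {p : ℝ × ℝ | 0 < p.1} ∩ ({p | 0 < p.2} ∩ {p | p.1 ^ 2 + p.2 ^ 2 < R ^ 2}) := by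
    ext p; simp [qd, and_assoc]
  rw [this]
  exact (measurableSet_lt measurable_const measurable_fst).inter
    ((measurableSet_lt measurable_const measurable_snd).inter
      (measurableSet_lt (by fun_prop) measurable_const))

lemma polar_qd (R : ℝ) (hR : 0 ≤ R) (f₀ : ℝ → ℝ) :
    ∫ p in qd R, f₀ (p.1 ^ 2 + p.2 ^ 2) =
      (π / 2) * ∫ r in Ioo (0 : ℝ) R, r * f₀ (r ^ 2) := by
  have hπ := Real.pi_pos
  have h1 : ∫ p in qd R, f₀ (p.1 ^ 2 + p.2 ^ 2)
      = ∫ p, (qd R).indicator (fun p : ℝ × ℝ => f₀ (p.1 ^ 2 + p.2 ^ 2)) p :=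
    (integral_indicator (measurableSet_qd R)).symm
  rw [h1, ← integral_comp_polarCoord_symm]
  have h2 : EqOn (fun p : ℝ × ℝ =>
        p.1 • (qd R).indicator (fun q : ℝ × ℝ => f₀ (q.1 ^ 2 + q.2 ^ 2)) (polarCoord.symm p))
      ((Ioo (0 : ℝ) R ×ˢ Ioo (0 : ℝ) (π / 2)).indicator
        (fun q : ℝ × ℝ => q.1 * f₀ (q.1 ^ 2))) polarCoord.target := by
    rintro ⟨r, θ⟩ ⟨hr, hθ⟩
    simp only [mem_Ioi] at hr
    simp only [mem_Ioo] at hθ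
    have hmem : polarCoord.symm (r, θ) ∈ qd R ↔
        (r, θ) ∈ Ioo (0 : ℝ) R ×ˢ Ioo (0 : ℝ) (π / 2) := by
      simp only [polarCoord_symm_apply, qd, mem_setOf_eq, mem_prod, mem_Ioo]
      constructor
      · rintro ⟨ha, hb, hc⟩
        have hcos : 0 < Real.cos θ := by
          by_contra h; push_neg at h
          nlinarith [mul_nonpos_of_nonneg_of_nonpos hr.le h]
        have hsin : 0 < Real.sin θ := by
          by_contra h; push_neg at h
          nlinarith [mul_nonpos_of_nonneg_of_nonpos hr.le h]
        have hθ1 : 0 < θ := by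
          by_contra h; push_neg at h
          exact absurd (Real.sin_nonpos_of_nonpos_of_neg_pi_le h hθ.1.le) (not_le.2 hsin)
        have hθ2 : θ < π / 2 := by
          by_contra h; push_neg at h
          exact absurd (Real.cos_nonpos_of_pi_div_two_le_of_le h (by linarith)) (not_le.2 hcos)
        have hr2 : r ^ 2 < R ^ 2 := by nlinarith [Real.sin_sq_add_cos_sq θ]
        exact ⟨⟨hr, lt_of_pow_lt_pow_left₀ 2 hR hr2⟩, hθ1, hθ2⟩
      · rintro ⟨⟨hr0, hrR⟩, hθ1, hθ2⟩
        have hcos : 0 < Real.cos θ :=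
          Real.cos_pos_of_mem_Ioo ⟨by linarith, hθ2⟩
        have hsin : 0 < Real.sin θ := Real.sin_pos_of_pos_of_lt_pi hθ1 (by linarith)
        refine ⟨mul_pos hr hcos, mul_pos hr hsin, ?_⟩
        have hr2 : r ^ 2 < R ^ 2 := by nlinarith
        nlinarith [Real.sin_sq_add_cos_sq θ]
    have hval : (r * Real.cos θ) ^ 2 + (r * Real.sin θ) ^ 2 = r ^ 2 := by
      linear_combination r ^ 2 * Real.sin_sq_add_cos_sq θ
    by_cases h : polarCoord.symm (r, θ) ∈ qd R
    · have h' : ((r * Real.cos θ, r * Real.sin θ) : ℝ × ℝ) ∈ qd R := by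
        simpa [polarCoord_symm_apply] using h
      simp only [indicator_of_mem (hmem.1 h), polarCoord_symm_apply,
        indicator_of_mem h', smul_eq_mul, hval]
    · have h' : ((r * Real.cos θ, r * Real.sin θ) : ℝ × ℝ) ∉ qd R := by
        simpa [polarCoord_symm_apply] using h
      simp only [indicator_of_notMem (fun hc => h (hmem.2 hc)), polarCoord_symm_apply,
        indicator_of_notMem h', smul_zero]
  rw [setIntegral_congr_fun polarCoord.open_target.measurableSet h2,
    setIntegral_indicator (measurableSet_Ioo.prod measurableSet_Ioo)]
  have htgt : polarCoord.target ∩ (Ioo (0 : ℝ) R ×ˢ Ioo (0 : ℝ) (π / 2))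
      = Ioo (0 : ℝ) R ×ˢ Ioo (0 : ℝ) (π / 2) := by
    apply inter_eq_self_of_subset_right
    rintro ⟨r, θ⟩ ⟨h1, h2⟩
    exact ⟨mem_Ioi.2 h1.1, mem_Ioo.2 ⟨by linarith [h2.1], by linarith [h2.2]⟩⟩
  rw [htgt]
  have hfun : (fun q : ℝ × ℝ => q.1 * f₀ (q.1 ^ 2))
      = fun q : ℝ × ℝ => (fun r : ℝ => r * f₀ (r ^ 2)) q.1 * (fun _ : ℝ => (1 : ℝ)) q.2 := by
    funext q; simp
  rw [Measure.volume_eq_prod, ← Measure.prod_restrict, hfun,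
    integral_prod_mul (fun r : ℝ => r * f₀ (r ^ 2)) (fun _ : ℝ => (1 : ℝ))]
  simp only [integral_const, smul_eq_mul, mul_one, Measure.restrict_apply_univ, Real.volume_Ioo]
  rw [measureReal_def, Measure.restrict_apply_univ, Real.volume_Ioo, ENNReal.toReal_ofReal (by linarith)]
  ring

lemma int_r_exp (R : ℝ) (hR : 0 ≤ R) :
    ∫ r in Ioo (0 : ℝ) R, r * Real.exp (-r ^ 2) = (1 - Real.exp (-R ^ 2)) / 2 := by
  rw [← integral_Ioc_eq_integral_Ioo, ← intervalIntegral.integral_of_le hR]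
  have hderiv : ∀ x ∈ Set.uIcc (0 : ℝ) R,
      HasDerivAt (fun x : ℝ => -Real.exp (-x ^ 2) / 2) (x * Real.exp (-x ^ 2)) x := by
    intro x _
    have h1 : HasDerivAt (fun x : ℝ => -x ^ 2) (-(2 * x)) x := by
      simpa using ((hasDerivAt_pow 2 x).fun_neg)
    have h2 := (h1.exp.fun_neg).div_const 2
    refine h2.congr_deriv ?_
    ring
  rw [intervalIntegral.integral_eq_sub_of_hasDerivAt hderiv
    ((Continuous.mul continuous_id (by continuity)).intervalIntegrable 0 R)]
  norm_num
  ring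

lemma int_r_id (R : ℝ) (hR : 0 ≤ R) :
    ∫ r in Ioo (0 : ℝ) R, r = R ^ 2 / 2 := by
  rw [← integral_Ioc_eq_integral_Ioo, ← intervalIntegral.integral_of_le hR,
    integral_id]
  ring

lemma qd_exp (R : ℝ) (hR : 0 ≤ R) :
    ∫ p in qd R, Real.exp (-(p.1 ^ 2 + p.2 ^ 2)) = π / 4 * (1 - Real.exp (-R ^ 2)) := by
  have := polar_qd R hR (fun s => Real.exp (-s))
  rw [this, int_r_exp R hR]
  ring

lemma qd_one (R : ℝ) (hR : 0 ≤ R) :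
    ∫ p in qd R, (1 : ℝ) = π / 4 * R ^ 2 := by
  have := polar_qd R hR (fun _ => (1 : ℝ))
  simp only [mul_one] at this
  rw [this, int_r_id R hR]
  ring

end ErfSq

/-- The Gauss error function `erf(z) = ∫_0^z (2/√π) exp(-t²) dt`. -/
noncomputable def erf (z : ℝ) : ℝ :=
  ∫ t in (0 : ℝ)..z, 2 / Real.sqrt Real.pi * Real.exp (-t ^ 2)

namespace ErfSq

lemma key (z : ℝ) (hz : 0 ≤ z) : erf z ^ 2 ≤ 1 - Real.exp (-(4 / π) * z ^ 2) := by
  have hπ : 0 < π := Real.pi_pos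
  have hsπ : 0 < Real.sqrt π := Real.sqrt_pos.2 hπ
  set R : ℝ := 2 / Real.sqrt π * z with hRdef
  have hR : 0 ≤ R := by positivity
  have hR2 : R ^ 2 = 4 / π * z ^ 2 := by
    rw [hRdef, mul_pow, div_pow, Real.sq_sqrt hπ.le]; norm_num
  set S : Set (ℝ × ℝ) := Ioc (0 : ℝ) z ×ˢ Ioc (0 : ℝ) z with hSdef
  set f : ℝ × ℝ → ℝ := fun p => Real.exp (-(p.1 ^ 2 + p.2 ^ 2)) with hfdef
  set c : ℝ := Real.exp (-R ^ 2) with hcdef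
  set g : ℝ × ℝ → ℝ := fun p => f p - c with hgdef
  have hSm : MeasurableSet S := measurableSet_Ioc.prod measurableSet_Ioc
  have hDm := measurableSet_qd R
  have hfc : Continuous f := by fun_prop
  have hgc : Continuous g := by fun_prop
  set M : ℝ := max z R with hMdef
  have hbox : IsCompact (Icc (0 : ℝ) M ×ˢ Icc (0 : ℝ) M) := isCompact_Icc.prod isCompact_Icc
  have hSsub : S ⊆ Icc (0 : ℝ) M ×ˢ Icc (0 : ℝ) M := by
    rintro ⟨x, y⟩ ⟨hx, hy⟩
    exact ⟨⟨hx.1.le, hx.2.trans (le_max_left _ _)⟩, ⟨hy.1.le, hy.2.trans (le_max_left _ _)⟩⟩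
  have hDsub : qd R ⊆ Icc (0 : ℝ) M ×ˢ Icc (0 : ℝ) M := by
    rintro ⟨x, y⟩ ⟨hx, hy, hxy⟩
    have hx2 : x ≤ R := (lt_of_pow_lt_pow_left₀ 2 hR (by nlinarith)).le
    have hy2 : y ≤ R := (lt_of_pow_lt_pow_left₀ 2 hR (by nlinarith)).le
    exact ⟨⟨hx.le, hx2.trans (le_max_right _ _)⟩, ⟨hy.le, hy2.trans (le_max_right _ _)⟩⟩
  have hgbox : IntegrableOn g (Icc (0 : ℝ) M ×ˢ Icc (0 : ℝ) M) :=
    hgc.continuousOn.integrableOn_compact hbox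
  have hfbox : IntegrableOn f (Icc (0 : ℝ) M ×ˢ Icc (0 : ℝ) M) :=
    hfc.continuousOn.integrableOn_compact hbox
  have hgS : IntegrableOn g S := hgbox.mono_set hSsub
  have hgD : IntegrableOn g (qd R) := hgbox.mono_set hDsub
  have hfS : IntegrableOn f S := hfbox.mono_set hSsub
  have hfD : IntegrableOn f (qd R) := hfbox.mono_set hDsub
  have hfinS : volume S < ⊤ := (measure_mono hSsub).trans_lt hbox.measure_lt_top
  have hfinD : volume (qd R) < ⊤ := (measure_mono hDsub).trans_lt hbox.measure_lt_top
  -- compare the integrals of g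
  have hcomp : ∫ p in S, g p ≤ ∫ p in qd R, g p := by
    have hsplit : ∫ p in S, g p = (∫ p in S ∩ qd R, g p) + ∫ p in S \ qd R, g p := by
      nth_rewrite 1 [← Set.inter_union_diff S (qd R)]
      exact setIntegral_union (Set.disjoint_left.mpr fun a ha hb => hb.2 ha.2)
        (hSm.diff hDm) (hgS.mono_set inter_subset_left) (hgS.mono_set diff_subset)
    have hneg : ∫ p in S \ qd R, g p ≤ 0 := by
      apply setIntegral_nonpos (hSm.diff hDm)
      rintro ⟨x, y⟩ ⟨⟨hx, hy⟩, hnd⟩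
      have hge : R ^ 2 ≤ x ^ 2 + y ^ 2 := by
        by_contra hlt; push_neg at hlt; exact hnd ⟨hx.1, hy.1, hlt⟩
      simp only [hgdef, hfdef, sub_nonpos, hcdef]
      exact Real.exp_le_exp.2 (by linarith)
    have hmono : ∫ p in S ∩ qd R, g p ≤ ∫ p in qd R, g p := by
      apply setIntegral_mono_set hgD
      · refine (ae_restrict_iff' hDm).2 (ae_of_all _ ?_)
        rintro ⟨x, y⟩ ⟨hx, hy, hxy⟩
        simp only [hgdef, hfdef, Pi.zero_apply, sub_nonneg, hcdef]
        exact Real.exp_le_exp.2 (by linarith)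
      · exact (inter_subset_right).eventuallyLE
    linarith
  -- volumes
  have hvolS : (volume S).toReal = z ^ 2 := by
    rw [hSdef, Measure.volume_eq_prod, Measure.prod_prod, Real.volume_Ioc, sub_zero,
      ← ENNReal.ofReal_mul hz, ENNReal.toReal_ofReal (by nlinarith)]
    ring
  have hvolD : (volume (qd R)).toReal = z ^ 2 := by
    have h1 := qd_one R hR
    rw [setIntegral_const, smul_eq_mul, mul_one] at h1
    rw [← measureReal_def, h1, hR2]
    field_simp
  -- relate integrals of f and g
  have hSfg : ∫ p in S, g p = (∫ p in S, f p) - c * z ^ 2 := by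
    have := integral_sub hfS (integrableOn_const (C := c) hfinS.ne)
    simpa [hgdef, setIntegral_const, measureReal_def, hvolS, mul_comm] using this
  have hDfg : ∫ p in qd R, g p = (∫ p in qd R, f p) - c * z ^ 2 := by
    have := integral_sub hfD (integrableOn_const (C := c) hfinD.ne)
    simpa [hgdef, setIntegral_const, measureReal_def, hvolD, mul_comm] using this
  have hstep : ∫ p in S, f p ≤ ∫ p in qd R, f p := by linarith
  -- erf squared as a double integral
  have herf2 : erf z ^ 2 = 4 / π * ∫ p in S, f p := by
    rw [erf, intervalIntegral.integral_of_le hz, sq, ← integral_prod_mul,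
      Measure.prod_restrict, ← Measure.volume_eq_prod]
    rw [← integral_const_mul]
    apply setIntegral_congr_fun hSm
    rintro ⟨x, y⟩ -
    have he : Real.exp (-x ^ 2) * Real.exp (-y ^ 2) = Real.exp (-(x ^ 2 + y ^ 2)) := by
      rw [← Real.exp_add]; ring_nf
    have h4 : Real.sqrt π * Real.sqrt π = π := Real.mul_self_sqrt hπ.le
    simp only [hfdef]
    have hre : 2 / Real.sqrt π * Real.exp (-x ^ 2) * (2 / Real.sqrt π * Real.exp (-y ^ 2))
        = (2 / Real.sqrt π * (2 / Real.sqrt π)) * (Real.exp (-x ^ 2) * Real.exp (-y ^ 2)) := by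
      ring
    rw [hre, he]
    congr 1
    rw [div_mul_div_comm, h4]
    norm_num
  calc erf z ^ 2 = 4 / π * ∫ p in S, f p := herf2
    _ ≤ 4 / π * ∫ p in qd R, f p := by
        exact mul_le_mul_of_nonneg_left hstep (by positivity)
    _ = 4 / π * (π / 4 * (1 - Real.exp (-R ^ 2))) := by rw [qd_exp R hR]
    _ = 1 - Real.exp (-R ^ 2) := by field_simp
    _ = 1 - Real.exp (-(4 / π) * z ^ 2) := by rw [hR2]; ring_nf

end ErfSq

/-- For every real `z`, `erf(z)² ≤ 1 − exp(−(4/π) z²)`. -/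
theorem erf_sq_le (z : ℝ) :
    erf z ^ 2 ≤ 1 - Real.exp (-(4 / Real.pi) * z ^ 2) := by
  rcases le_total 0 z with hz | hz
  · exact ErfSq.key z hz
  · have h1 : erf (-z) = - erf z := by
      rw [erf, erf, intervalIntegral.integral_symm]
      congr 1
      have := intervalIntegral.integral_comp_neg
        (a := (0:ℝ)) (b := z) (fun t => 2 / Real.sqrt π * Real.exp (-t ^ 2))
      simp only [neg_zero] at this
      rw [← this]
      apply intervalIntegral.integral_congr
      intro t _
      simp [neg_pow]
    have h3 := ErfSq.key (-z) (by linarith)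
    rw [h1, neg_sq, neg_sq] at h3
    exact h3
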